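/- Let G be a multitree with chain structure n, w_0 an admissible multidegree, and (w_v)_v a tight tuple in the twist-orbit V(G(w_0)). Then for every vertex v, the admissible multidegree w_v is obtained from the v-reduced multidegree w_v^red by a sequence of twists at vertices in V(G) \ {v} only. Consequently the divisor D_v := D^v_{w_v^red, w_v} on the component Z_v (recording the local effect at v of twisting from w_v^red to w_v) is effective. -/

import Mathlib

open Finset

/-- An admissible multidegree on a graph with vertex set `V`, edge set `E` and
chain structure `n`. -/
structure AdmDeg (V E : Type*) (n : E → ℕ) where
  wG : V → ℤ
  mu : (e : E) → ZMod (n e)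

variable {V E : Type*} [Fintype V] [Fintype E] [DecidableEq V] [DecidableEq E]

/-- The total degree of an admissible multidegree. -/
def AdmDeg.degree (n : E → ℕ) (w : AdmDeg V E n) : ℤ :=
  ((univ.filter fun e => w.mu e ≠ 0).card : ℤ) + ∑ v, w.wG v

/-- The twist of an admissible multidegree at a vertex `v` (the graph is oriented by
`tail`/`head`, and `σ(e,v) = 1` if `v` is the tail of `e`, `-1` if it is the head).
For each edge `e` incident to `v`: if `μ(e) + σ(e,v) = 0` the other endpoint gains a chip;
if `μ(e) = 0` then `v` loses a chip; and `μ(e)` is replaced by `μ(e) + σ(e,v)`. -/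
def twist (tail head : E → V) (n : E → ℕ) (v : V) (w : AdmDeg V E n) : AdmDeg V E n where
  wG := fun u => w.wG u
    + ((univ.filter fun e => tail e = v ∧ head e = u ∧ w.mu e + 1 = 0).card : ℤ)
    + ((univ.filter fun e => head e = v ∧ tail e = u ∧ w.mu e - 1 = 0).card : ℤ)
    - (if u = v then
        ((univ.filter fun e => (tail e = v ∨ head e = v) ∧ w.mu e = 0).card : ℤ) else 0)
  mu := fun e =>
    if tail e = v then w.mu e + 1 else if head e = v then w.mu e - 1 else w.mu e

/-- The negative twist at `v`: the inverse of the twist at `v`. -/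
def negTwist (tail head : E → V) (n : E → ℕ) (v : V) (w : AdmDeg V E n) : AdmDeg V E n where
  wG := fun u => w.wG u
    - ((univ.filter fun e =>
        ((tail e = v ∧ head e = u) ∨ (head e = v ∧ tail e = u)) ∧ w.mu e = 0).card : ℤ)
    + (if u = v then
        ((univ.filter fun e =>
          (tail e = v ∧ w.mu e = 1) ∨ (head e = v ∧ w.mu e = -1)).card : ℤ) else 0)
  mu := fun e =>
    if tail e = v then w.mu e - 1 else if head e = v then w.mu e + 1 else w.mu e

/-- `w` is concentrated on `v`: there is an ordering of the vertices starting at `v`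
such that each subsequent vertex has negative coefficient after performing the negative
twists at all previous vertices. -/
def Concentrated (tail head : E → V) (n : E → ℕ) (w : AdmDeg V E n) (v : V) : Prop :=
  ∃ l : List V, l.Nodup ∧ (∀ u, u ∈ l) ∧ l.head? = some v ∧
    ∀ (i : ℕ) (hi : i < l.length), 0 < i →
      ((l.take i).foldl (fun a u => negTwist tail head n u a) w).wG (l.get ⟨i, hi⟩) < 0

/-- `w` lies in the twist-orbit `G(w₀)` of `w₀`. -/
def InOrbit (tail head : E → V) (n : E → ℕ) (w0 w : AdmDeg V E n) : Prop :=
  Relation.ReflTransGen (fun a b => ∃ v, b = twist tail head n v a) w0 w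

/-- The simple graph `Ḡ` obtained from `G` by collapsing parallel edges. -/
def collapse (tail head : E → V) : SimpleGraph V :=
  SimpleGraph.fromRel fun u u' => ∃ e, tail e = u ∧ head e = u'

/-- The partial twist of `w` at `(e, a)` for a multitree, where `e` is the edge of `Ḡ`
joining `a` to `b`: the twist operations of the twist at `a` are performed only on the
edges of `G` lying over `e`, i.e. on the edges joining `a` and `b`. -/
def ptwist (tail head : E → V) (n : E → ℕ) (a b : V) (w : AdmDeg V E n) :
    AdmDeg V E n where
  wG := fun u => w.wG u
    + (if u = b then
        ((univ.filter fun e =>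
          (tail e = a ∧ head e = b ∧ w.mu e + 1 = 0) ∨
          (tail e = b ∧ head e = a ∧ w.mu e - 1 = 0)).card : ℤ) else 0)
    - (if u = a then
        ((univ.filter fun e =>
          ((tail e = a ∧ head e = b) ∨ (tail e = b ∧ head e = a)) ∧ w.mu e = 0).card : ℤ)
       else 0)
  mu := fun e =>
    if tail e = a ∧ head e = b then w.mu e + 1
    else if tail e = b ∧ head e = a then w.mu e - 1
    else w.mu e

/-- The divisor `D^v_{w,w'}` on the component `Z_v` determined by a path of twists
(at the listed vertices, in order) starting at `w`, recorded as a multiplicity function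
on the edges of `G` incident to `v` (the value at `e'` is the coefficient of the marked
point `P_{e'}^v`): a twist at a neighbour `u` of `v` adds `P_{e'}^v` for every edge
`e'` between `u` and `v` whose new `μ`-value is `0`, while a twist at `v` itself
removes `P_{e'}^v` for every edge `e'` incident to `v` with `μ(e') = 0`. -/
def pathDiv (tail head : E → V) (n : E → ℕ) (v : V) :
    List V → AdmDeg V E n → E → ℤ
  | [], _ => fun _ => 0
  | u :: l, a => fun e =>
      ((if u ≠ v ∧ ((tail e = u ∧ head e = v) ∨ (tail e = v ∧ head e = u)) ∧
            (if tail e = u then a.mu e + 1 else a.mu e - 1) = 0 then 1 else 0) -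
        (if u = v ∧ (tail e = v ∨ head e = v) ∧ a.mu e = 0 then 1 else 0)) +
      pathDiv tail head n v l (twist tail head n u a) e

section Infra
set_option linter.unusedSectionVars false

lemma sub_eq_neg_self' {A : Type*} [AddGroup A] (a b : A) :
    a - b = -b ↔ a = 0 := by
  rw [sub_eq_add_neg]; exact add_eq_right

lemma AdmDeg.ext' {n : E → ℕ} {w w' : AdmDeg V E n} (h1 : ∀ x, w.wG x = w'.wG x)
    (h2 : ∀ e, w.mu e = w'.mu e) : w = w' := by
  cases w; cases w'; simp only [AdmDeg.mk.injEq]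
  exact ⟨funext h1, funext h2⟩

variable (tail head : E → V) (n : E → ℕ)

def twDelta (v : V) (w : AdmDeg V E n) (x : V) (e : E) : ℤ :=
  (if tail e = v ∧ head e = x ∧ w.mu e + 1 = 0 then 1 else 0)
  + (if head e = v ∧ tail e = x ∧ w.mu e - 1 = 0 then 1 else 0)
  - (if x = v ∧ (tail e = v ∨ head e = v) ∧ w.mu e = 0 then 1 else 0)

def ntDelta (v : V) (w : AdmDeg V E n) (x : V) (e : E) : ℤ :=
  (if x = v ∧ ((tail e = v ∧ w.mu e = 1) ∨ (head e = v ∧ w.mu e = -1)) then 1 else 0)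
  - (if ((tail e = v ∧ head e = x) ∨ (head e = v ∧ tail e = x)) ∧ w.mu e = 0 then 1 else 0)

lemma twist_wG (v : V) (w : AdmDeg V E n) (x : V) :
    (twist tail head n v w).wG x = w.wG x + ∑ e, twDelta tail head n v w x e := by
  simp only [twist, twDelta, Finset.card_filter, Finset.sum_add_distrib,
    Finset.sum_sub_distrib]
  push_cast
  rcases eq_or_ne x v with h | h <;>
    simp [h, Finset.sum_add_distrib, Finset.sum_sub_distrib] <;> ring

lemma negTwist_wG (v : V) (w : AdmDeg V E n) (x : V) :
    (negTwist tail head n v w).wG x = w.wG x + ∑ e, ntDelta tail head n v w x e := by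
  simp only [negTwist, ntDelta, Finset.card_filter, Finset.sum_add_distrib,
    Finset.sum_sub_distrib]
  push_cast
  rcases eq_or_ne x v with h | h <;>
    simp [h, Finset.sum_add_distrib, Finset.sum_sub_distrib] <;> ring

lemma negTwist_twist (hloop : ∀ e, tail e ≠ head e) (v : V) (w : AdmDeg V E n) :
    negTwist tail head n v (twist tail head n v w) = w := by
  apply AdmDeg.ext'
  · intro x
    rw [negTwist_wG, twist_wG, add_assoc, ← Finset.sum_add_distrib]
    convert add_zero (w.wG x) using 2
    rw [← Finset.sum_const_zero (s := (univ : Finset E))]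
    apply Finset.sum_congr rfl
    intro e _
    have hl := hloop e
    simp only [twDelta, ntDelta, twist]
    by_cases h1 : tail e = v <;> by_cases h2 : head e = v <;>
      by_cases h5 : tail e = x <;> by_cases h6 : head e = x <;>
      by_cases h7 : x = v <;>
      simp_all [sub_eq_zero, add_eq_right, sub_add_cancel, add_sub_cancel_right,
        eq_neg_iff_add_eq_zero, sub_eq_neg_self'] <;>
      split_ifs <;> omega
  · intro e
    have hl := hloop e
    simp only [twist, negTwist]
    by_cases h1 : tail e = v <;> by_cases h2 : head e = v <;> simp_all

lemma twist_negTwist (hloop : ∀ e, tail e ≠ head e) (v : V) (w : AdmDeg V E n) :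
    twist tail head n v (negTwist tail head n v w) = w := by
  apply AdmDeg.ext'
  · intro x
    rw [twist_wG, negTwist_wG, add_assoc, ← Finset.sum_add_distrib]
    convert add_zero (w.wG x) using 2
    rw [← Finset.sum_const_zero (s := (univ : Finset E))]
    apply Finset.sum_congr rfl
    intro e _
    have hl := hloop e
    simp only [twDelta, ntDelta, negTwist]
    by_cases h1 : tail e = v <;> by_cases h2 : head e = v <;>
      by_cases h5 : tail e = x <;> by_cases h6 : head e = x <;>
      by_cases h7 : x = v <;>
      simp_all [sub_eq_zero, add_eq_right, sub_add_cancel, add_sub_cancel_right,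
        eq_neg_iff_add_eq_zero, sub_eq_neg_self'] <;>
      split_ifs <;> omega
  · intro e
    have hl := hloop e
    simp only [twist, negTwist]
    by_cases h1 : tail e = v <;> by_cases h2 : head e = v <;> simp_all

def phiDelta (S : Finset V) (w : AdmDeg V E n) (x : V) (e : E) : ℤ :=
  (if tail e ∈ S ∧ head e ∉ S ∧ head e = x ∧ w.mu e + 1 = 0 then 1 else 0)
  - (if tail e ∈ S ∧ head e ∉ S ∧ tail e = x ∧ w.mu e = 0 then 1 else 0)
  + (if head e ∈ S ∧ tail e ∉ S ∧ tail e = x ∧ w.mu e - 1 = 0 then 1 else 0)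
  - (if head e ∈ S ∧ tail e ∉ S ∧ head e = x ∧ w.mu e = 0 then 1 else 0)

def phi (S : Finset V) (w : AdmDeg V E n) : AdmDeg V E n where
  wG := fun x => w.wG x + ∑ e, phiDelta tail head n S w x e
  mu := fun e => w.mu e + (if tail e ∈ S then 1 else 0) - (if head e ∈ S then 1 else 0)

lemma phi_step (hloop : ∀ e, tail e ≠ head e) (S : Finset V) (v : V) (hv : v ∉ S)
    (w : AdmDeg V E n) :
    twist tail head n v (phi tail head n S w) = phi tail head n (insert v S) w := by
  apply AdmDeg.ext'
  · intro x
    rw [twist_wG]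
    show (w.wG x + ∑ e, phiDelta tail head n S w x e) + _ = w.wG x + _
    rw [add_assoc, ← Finset.sum_add_distrib]
    congr 1
    apply Finset.sum_congr rfl
    intro e _
    have hl := hloop e
    simp only [twDelta, phiDelta, phi, Finset.mem_insert]
    by_cases h1 : tail e = v <;> by_cases h2 : head e = v <;>
      by_cases h3 : tail e ∈ S <;> by_cases h4 : head e ∈ S <;>
      by_cases h5 : tail e = x <;> by_cases h6 : head e = x <;>
      by_cases h7 : x = v <;>
      simp_all [sub_add_cancel, add_sub_cancel_right] <;>
      split_ifs <;> omega
  · intro e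
    simp only [twist, phi, Finset.mem_insert]
    have hl := hloop e
    by_cases h1 : tail e = v <;> by_cases h2 : head e = v <;>
      by_cases h3 : tail e ∈ S <;> by_cases h4 : head e ∈ S <;>
      simp_all <;> ring

lemma phi_empty (w : AdmDeg V E n) : phi tail head n ∅ w = w := by
  apply AdmDeg.ext' <;> intro x <;> simp [phi, phiDelta]

lemma phi_univ (w : AdmDeg V E n) : phi tail head n univ w = w := by
  apply AdmDeg.ext' <;> intro x <;> simp [phi, phiDelta]

def Tl (l : List V) (w : AdmDeg V E n) : AdmDeg V E n :=
  l.foldl (fun a u => twist tail head n u a) w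

def Nl (l : List V) (w : AdmDeg V E n) : AdmDeg V E n :=
  l.foldl (fun a u => negTwist tail head n u a) w

lemma Tl_nil (w : AdmDeg V E n) : Tl tail head n [] w = w := rfl

lemma Tl_cons (u : V) (l : List V) (w : AdmDeg V E n) :
    Tl tail head n (u :: l) w = Tl tail head n l (twist tail head n u w) := rfl

lemma Tl_append (l l' : List V) (w : AdmDeg V E n) :
    Tl tail head n (l ++ l') w = Tl tail head n l' (Tl tail head n l w) :=
  List.foldl_append

lemma Nl_cons (u : V) (l : List V) (w : AdmDeg V E n) :
    Nl tail head n (u :: l) w = Nl tail head n l (negTwist tail head n u w) := rfl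

lemma Nl_append (l l' : List V) (w : AdmDeg V E n) :
    Nl tail head n (l ++ l') w = Nl tail head n l' (Nl tail head n l w) :=
  List.foldl_append

lemma Tl_eq_phi (hloop : ∀ e, tail e ≠ head e) {l : List V} (hl : l.Nodup)
    (w : AdmDeg V E n) : Tl tail head n l w = phi tail head n l.toFinset w := by
  induction l using List.reverseRecOn with
  | nil => simp [Tl_nil, phi_empty]
  | append_singleton l v ih =>
    have h1 : l.Nodup := hl.sublist (by simp)
    have h2 : v ∉ l := by
      have := List.nodup_append.mp hl
      intro hc
      exact this.2.2 v hc v (by simp) rfl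
    rw [Tl_append, Tl_cons, Tl_nil, ih h1, phi_step tail head n hloop _ _ (by simpa using h2)]
    congr 1
    ext x
    simp [or_comm]

lemma Tl_full (hloop : ∀ e, tail e ≠ head e) {l : List V} (hl : l.Nodup)
    (hfull : ∀ x, x ∈ l) (w : AdmDeg V E n) : Tl tail head n l w = w := by
  rw [Tl_eq_phi tail head n hloop hl]
  have : l.toFinset = univ := by ext x; simp [hfull]
  rw [this, phi_univ]

lemma twist_comm (hloop : ∀ e, tail e ≠ head e) (a b : V) (w : AdmDeg V E n) :
    twist tail head n a (twist tail head n b w) = twist tail head n b (twist tail head n a w) := by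
  rcases eq_or_ne a b with rfl | hab
  · rfl
  · have h1 : Tl tail head n [b, a] w = twist tail head n a (twist tail head n b w) := rfl
    have h2 : Tl tail head n [a, b] w = twist tail head n b (twist tail head n a w) := rfl
    rw [← h1, ← h2, Tl_eq_phi tail head n hloop (by simp [hab.symm]),
      Tl_eq_phi tail head n hloop (by simp [hab])]
    congr 1
    ext x
    simp [or_comm]

lemma twist_injective (hloop : ∀ e, tail e ≠ head e) (v : V) :
    Function.Injective (twist tail head n v) := fun w w' h => by
  rw [← negTwist_twist tail head n hloop v w, h, negTwist_twist tail head n hloop v w']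

lemma twist_negTwist_comm (hloop : ∀ e, tail e ≠ head e) (a b : V) (w : AdmDeg V E n) :
    twist tail head n a (negTwist tail head n b w)
      = negTwist tail head n b (twist tail head n a w) := by
  apply twist_injective tail head n hloop b
  rw [twist_comm tail head n hloop b a, twist_negTwist tail head n hloop,
    twist_negTwist tail head n hloop]

lemma negTwist_comm (hloop : ∀ e, tail e ≠ head e) (a b : V) (w : AdmDeg V E n) :
    negTwist tail head n a (negTwist tail head n b w)
      = negTwist tail head n b (negTwist tail head n a w) := by
  apply twist_injective tail head n hloop a
  rw [twist_negTwist tail head n hloop, twist_negTwist_comm tail head n hloop,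
    twist_negTwist tail head n hloop]

lemma Tl_perm (hloop : ∀ e, tail e ≠ head e) {l₁ l₂ : List V} (h : l₁.Perm l₂)
    (w : AdmDeg V E n) : Tl tail head n l₁ w = Tl tail head n l₂ w := by
  induction h generalizing w with
  | nil => rfl
  | cons x _ ih => rw [Tl_cons, Tl_cons, ih]
  | swap x y l => rw [Tl_cons, Tl_cons, Tl_cons, Tl_cons, twist_comm tail head n hloop]
  | trans _ _ ih1 ih2 => rw [ih1, ih2]

lemma Nl_perm (hloop : ∀ e, tail e ≠ head e) {l₁ l₂ : List V} (h : l₁.Perm l₂)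
    (w : AdmDeg V E n) : Nl tail head n l₁ w = Nl tail head n l₂ w := by
  induction h generalizing w with
  | nil => rfl
  | cons x _ ih => rw [Nl_cons, Nl_cons, ih]
  | swap x y l => rw [Nl_cons, Nl_cons, Nl_cons, Nl_cons, negTwist_comm tail head n hloop]
  | trans _ _ ih1 ih2 => rw [ih1, ih2]

lemma Nl_rev_Tl (hloop : ∀ e, tail e ≠ head e) (l : List V) (w : AdmDeg V E n) :
    Nl tail head n l.reverse (Tl tail head n l w) = w := by
  induction l generalizing w with
  | nil => rfl
  | cons u l ih =>
    rw [Tl_cons, List.reverse_cons, Nl_append, ih, Nl_cons,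
      negTwist_twist tail head n hloop]
    rfl

lemma negTwist_eq_Tl (hloop : ∀ e, tail e ≠ head e) (u : V) (w : AdmDeg V E n) :
    negTwist tail head n u w = Tl tail head n ((univ.erase u).toList) w := by
  have hnd : (u :: (univ.erase u).toList).Nodup := by
    simp [Finset.nodup_toList]
  have hfull : ∀ x, x ∈ (u :: (univ.erase u).toList) := by
    intro x
    rcases eq_or_ne x u with rfl | h
    · simp
    · simp [h]
  have := Tl_full tail head n hloop hnd hfull (negTwist tail head n u w)
  rw [Tl_cons, twist_negTwist tail head n hloop] at this
  exact this.symm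

lemma Nl_eq_Tl (hloop : ∀ e, tail e ≠ head e) (l : List V) :
    ∀ w : AdmDeg V E n, ∃ L : List V, Nl tail head n l w = Tl tail head n L w := by
  induction l with
  | nil => exact fun w => ⟨[], rfl⟩
  | cons u l ih =>
    intro w
    obtain ⟨L', hL'⟩ := ih (negTwist tail head n u w)
    refine ⟨(univ.erase u).toList ++ L', ?_⟩
    rw [Nl_cons, hL', Tl_append, negTwist_eq_Tl tail head n hloop]
end Infra


section Infra2
set_option linter.unusedSectionVars false
variable (tail head : E → V) (n : E → ℕ)

noncomputable def mword [Fintype V] (m : V → ℕ) : List V :=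
  (univ.toList (α := V)).flatMap fun u => List.replicate (m u) u

lemma count_flatMap_notmem (m : V → ℕ) (l : List V) (x : V) (hx : x ∉ l) :
    ((l.flatMap fun u => List.replicate (m u) u).count x) = 0 := by
  induction l with
  | nil => rfl
  | cons u l ih =>
    rw [List.flatMap_cons, List.count_append, List.count_replicate]
    have hxu : u ≠ x := fun hc => hx (by simp [hc])
    simp only [List.mem_cons, not_or] at hx
    rw [if_neg (by simpa using hxu), ih hx.2]

lemma count_flatMap (m : V → ℕ) (l : List V) (hl : l.Nodup) (x : V) (hx : x ∈ l) :
    ((l.flatMap fun u => List.replicate (m u) u).count x) = m x := by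
  induction l with
  | nil => simp at hx
  | cons u l ih =>
    rw [List.flatMap_cons, List.count_append, List.count_replicate]
    have hnd := List.nodup_cons.mp hl
    rcases List.mem_cons.mp hx with rfl | hxl
    · rw [if_pos (by simp), count_flatMap_notmem m l x hnd.1, Nat.add_zero]
    · have hxu : u ≠ x := fun hc => hnd.1 (hc ▸ hxl)
      rw [if_neg (by simpa using hxu), ih hnd.2 hxl, Nat.zero_add]

lemma count_mword (m : V → ℕ) (x : V) : (mword m).count x = m x :=
  count_flatMap m _ (Finset.nodup_toList _) x (by simp)

lemma Tl_flatten_replicate (hloop : ∀ e, tail e ≠ head e) (c : ℕ) (w : AdmDeg V E n) :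
    Tl tail head n ((List.replicate c ((univ : Finset V).toList)).flatten) w = w := by
  induction c generalizing w with
  | zero => rfl
  | succ c ih =>
    rw [List.replicate_succ, List.flatten_cons, Tl_append,
      Tl_full tail head n hloop (Finset.nodup_toList _) (fun x => by simp), ih]

lemma count_flatten_replicate (c : ℕ) (x : V) :
    ((List.replicate c ((univ : Finset V).toList)).flatten).count x = c := by
  induction c with
  | zero => rfl
  | succ c ih =>
    rw [List.replicate_succ, List.flatten_cons, List.count_append, ih,
      le_antisymm (List.nodup_iff_count_le_one.mp (Finset.nodup_toList _) x)
        (List.count_pos_iff.mpr (by simp))]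
    omega

lemma Tl_mword_add_const (hloop : ∀ e, tail e ≠ head e) (m : V → ℕ) (c : ℕ)
    (w : AdmDeg V E n) :
    Tl tail head n (mword fun u => m u + c) w = Tl tail head n (mword m) w := by
  have hperm : (mword fun u => m u + c).Perm
      (((List.replicate c ((univ : Finset V).toList)).flatten) ++ mword m) := by
    apply List.perm_iff_count.mpr
    intro x
    rw [count_mword, List.count_append, count_mword, count_flatten_replicate]
    omega
  rw [Tl_perm tail head n hloop hperm, Tl_append, Tl_flatten_replicate tail head n hloop]

lemma negTwist_wG_le (u x : V) (hx : x ≠ u) (w : AdmDeg V E n) :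
    (negTwist tail head n u w).wG x ≤ w.wG x := by
  simp only [negTwist, if_neg hx, add_zero]
  exact sub_le_self _ (Int.natCast_nonneg _)

lemma Nl_wG_le (l : List V) (x : V) (hx : x ∉ l) (w : AdmDeg V E n) :
    (Nl tail head n l w).wG x ≤ w.wG x := by
  induction l generalizing w with
  | nil => exact le_rfl
  | cons u l ih =>
    rw [Nl_cons]
    exact le_trans (ih (fun hc => hx (by simp [hc])) _)
      (negTwist_wG_le tail head n u x (fun hc => hx (by simp [hc])) w)

lemma pathDiv_nonneg (v : V) (l : List V) (hv : v ∉ l) :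
    ∀ (a : AdmDeg V E n) (e : E), 0 ≤ pathDiv tail head n v l a e := by
  induction l with
  | nil => intro a e; simp [pathDiv]
  | cons u l ih =>
    intro a e
    have huv : u ≠ v := fun hc => hv (by simp [hc])
    have hvl : v ∉ l := fun hc => hv (by simp [hc])
    have IH := ih hvl (twist tail head n u a) e
    have h2 : ¬(u = v ∧ (tail e = v ∨ head e = v) ∧ a.mu e = 0) := fun hc => huv hc.1
    simp only [pathDiv]
    rw [if_neg h2]
    split_ifs <;> omega

lemma mem_take_findIdx {α : Type*} (p : α → Bool) (l : List α) (x : α)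
    (hx : x ∈ l.take (l.findIdx p)) : p x = false := by
  induction l with
  | nil => simp at hx
  | cons a l ih =>
    rw [List.findIdx_cons] at hx
    by_cases hpa : p a
    · simp [hpa] at hx
    · simp only [hpa, cond_false, List.take_succ_cons, List.mem_cons] at hx
      rcases hx with rfl | hx
      · simpa using hpa
      · exact ih hx

lemma inOrbit_word {w0 w : AdmDeg V E n} (h : InOrbit tail head n w0 w) :
    ∃ l, Tl tail head n l w0 = w := by
  induction h with
  | refl => exact ⟨[], rfl⟩
  | tail _ h2 ih =>
    obtain ⟨l, hl⟩ := ih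
    obtain ⟨u, rfl⟩ := h2
    exact ⟨l ++ [u], by rw [Tl_append, hl]; rfl⟩
end Infra2


/-- for a tight tuple `(w_v)` in the twist-orbit of `w₀` on a multitree,
each `w_v` is obtained from the `v`-reduced multidegree `w_v^red` (the element of the
orbit concentrated on `v` and nonnegative away from `v`) by a sequence of twists at
vertices different from `v` only; consequently the divisor `D_v = D^v_{w_v^red, w_v}`
on `Z_v` is effective. -/
theorem tight_tuple_from_reduced (tail head : E → V)
    (hloopless : ∀ e, tail e ≠ head e) (n : E → ℕ) (hn : ∀ e, 0 < n e)
    (htree : (collapse tail head).IsTree)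
    (w0 : AdmDeg V E n) (w wred : V → AdmDeg V E n)
    (horb : ∀ u, InOrbit tail head n w0 (w u))
    (hconc : ∀ u, Concentrated tail head n (w u) u)
    (htight : ∀ a b : V,
      (∃ e, (tail e = a ∧ head e = b) ∨ (tail e = b ∧ head e = a)) →
      ∃ k : ℕ, w a = (fun x => ptwist tail head n b a x)^[k] (w b))
    (horbred : ∀ u, InOrbit tail head n w0 (wred u))
    (hconcred : ∀ u, Concentrated tail head n (wred u) u)
    (hnonneg : ∀ u x, x ≠ u → 0 ≤ (wred u).wG x) :
    ∀ v : V, ∃ l : List V, v ∉ l ∧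
      l.foldl (fun a u => twist tail head n u a) (wred v) = w v ∧
      ∀ e : E, 0 ≤ pathDiv tail head n v l (wred v) e := by
  intro v
  obtain ⟨l1, hl1⟩ := inOrbit_word tail head n (horbred v)
  obtain ⟨l2, hl2⟩ := inOrbit_word tail head n (horb v)
  have hw0 : Nl tail head n l1.reverse (wred v) = w0 := by
    rw [← hl1]; exact Nl_rev_Tl tail head n hloopless l1 w0
  obtain ⟨L', hL'⟩ := Nl_eq_Tl tail head n hloopless l1.reverse (wred v)
  have hL0 : Tl tail head n (L' ++ l2) (wred v) = w v := by
    rw [Tl_append, ← hL', hw0, hl2]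
  set L0 := L' ++ l2 with hL0def
  set m : V → ℕ := fun u => L0.count u with hmdef
  have hperm1 : (mword m).Perm L0 :=
    List.perm_iff_count.mpr fun x => by rw [count_mword]
  have hmw : Tl tail head n (mword m) (wred v) = w v := by
    rw [Tl_perm tail head n hloopless hperm1, hL0]
  obtain ⟨u0, -, hu0min⟩ :=
    Finset.exists_min_image (univ : Finset V) m ⟨v, Finset.mem_univ v⟩
  set c := m u0 with hcdef
  set m' : V → ℕ := fun u => m u - c with hm'def
  have hmm : (fun u => m' u + c) = m :=
    funext fun u => Nat.sub_add_cancel (hu0min u (Finset.mem_univ u))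
  have hmain : Tl tail head n (mword m') (wred v) = w v := by
    rw [← Tl_mword_add_const tail head n hloopless m' c, hmm, hmw]
  have hu0' : m' u0 = 0 := Nat.sub_self c
  by_cases hv0 : m' v = 0
  · refine ⟨mword m', ?_, hmain, ?_⟩
    · intro hc
      have := List.count_pos_iff.mpr hc
      rw [count_mword] at this
      omega
    · intro e
      apply pathDiv_nonneg
      intro hc
      have := List.count_pos_iff.mpr hc
      rw [count_mword] at this
      omega
  · exfalso
    have hback : Nl tail head n (mword m').reverse (w v) = wred v := by
      rw [← hmain]; exact Nl_rev_Tl tail head n hloopless _ _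
    obtain ⟨lc, hnd, hfull, hhead, hneg⟩ := hconc v
    obtain ⟨lt, rfl⟩ : ∃ lt, lc = v :: lt := by
      cases lc with
      | nil => simp at hhead
      | cons a lt =>
        simp only [List.head?_cons, Option.some.injEq] at hhead
        exact ⟨lt, by rw [hhead]⟩
    set p : V → Bool := fun u => decide (m' u = 0) with hpdef
    set i := (v :: lt).findIdx p with hidef
    have hilt : i < (v :: lt).length :=
      List.findIdx_lt_length.mpr ⟨u0, hfull u0, by simp [hpdef, hu0']⟩
    have hzero : m' ((v :: lt).get ⟨i, hilt⟩) = 0 := by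
      have := List.findIdx_getElem (p := p) (xs := v :: lt) (w := hilt)
      simpa [hpdef] using this
    have hipos : 0 < i := by
      rcases Nat.eq_zero_or_pos i with h0 | h
      · exfalso
        have hxv : (v :: lt).get ⟨i, hilt⟩ = v := by
          have hfin : (⟨i, hilt⟩ : Fin (v :: lt).length) = ⟨0, Nat.succ_pos _⟩ :=
            Fin.ext h0
          rw [hfin]
          rfl
        exact hv0 (hxv ▸ hzero)
      · exact h
    have hy := hneg i hilt hipos
    set xi := (v :: lt).get ⟨i, hilt⟩ with hxidef
    set P := (v :: lt).take i with hPdef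
    have hPn : P.Nodup := List.Sublist.nodup (List.take_sublist _ _) hnd
    have hcount : ∀ u, P.count u ≤ m' u := by
      intro u
      by_cases hu : u ∈ P
      · have h1 : P.count u ≤ 1 := List.nodup_iff_count_le_one.mp hPn u
        have h2 : m' u ≠ 0 := by
          rw [hPdef, hidef] at hu
          have := mem_take_findIdx p (v :: lt) u hu
          simpa [hpdef] using this
        omega
      · rw [List.count_eq_zero.mpr hu]
        omega
    set m'' : V → ℕ := fun u => m' u - P.count u with hm''def
    have hperm2 : (mword m').reverse.Perm (P ++ mword m'') := by
      apply List.perm_iff_count.mpr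
      intro x
      rw [List.count_reverse, count_mword, List.count_append, count_mword]
      have := hcount x
      simp only [hm''def]
      omega
    have hw' : Nl tail head n (mword m'') (Nl tail head n P (w v)) = wred v := by
      rw [← Nl_append, ← Nl_perm tail head n hloopless hperm2, hback]
    have hxiP : xi ∉ mword m'' := by
      intro hc
      have hpos := List.count_pos_iff.mpr hc
      rw [count_mword] at hpos
      have hm0 : m'' xi = 0 := by
        have hz : m' xi = 0 := hzero
        simp only [hm''def]
        omega
      omega
    have hle := Nl_wG_le tail head n (mword m'') xi hxiP (Nl tail head n P (w v))
    rw [hw'] at hle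
    have hxiv : xi ≠ v := fun hc => hv0 (by rw [← hc]; exact hzero)
    have hnn := hnonneg v xi hxiv
    have hlt : (Nl tail head n P (w v)).wG xi < 0 := hy
    omega
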